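/- Let p > 0, q > 0, m a natural number, and a ∈ ℝ. For v > 0 with v^{αp} > |a|, the Sadik transform of φ(t) = t^{pm+q−1} E_{p,q}^{(m)}(a t^p) equals m! · v^{αp − (αq + β)} / (v^{αp} − a)^{m+1}, where E_{p,q}^{(m)} is the m-th derivative of the two-parameter Mittag-Leffler function. -/

import Mathlib

open Real MeasureTheory Filter Set

/-- The two-parameter Mittag-Leffler function `E_{p,q}`. -/
noncomputable def mittagLeffler (p q : ℝ) : ℝ → ℝ :=
  fun z => ∑' k : ℕ, z ^ k / Real.Gamma (p * k + q)

lemma gamma_growth {p : ℝ} (hp : 0 < p) (C : ℝ) :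
    ∀ᶠ x : ℝ in atTop, C * Real.Gamma x ≤ Real.Gamma (x + p) := by
  set D : ℝ := max C 1 with hD
  have hD1 : (1:ℝ) ≤ D := le_max_right _ _
  have hD0 : 0 < D := lt_of_lt_of_le one_pos hD1
  have hCD : C ≤ D := le_max_left _ _
  have main : ∀ᶠ x : ℝ in atTop, D * Real.Gamma x ≤ Real.Gamma (x + p) := by
    rcases le_or_gt 1 p with hp1 | hp1
    · filter_upwards [eventually_ge_atTop (max 2 D)] with x hx
      have hx2 : (2:ℝ) ≤ x := le_trans (le_max_left _ _) hx
      have hxD : D ≤ x := le_trans (le_max_right _ _) hx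
      have hx0 : 0 < x := by linarith
      have hG : 0 < Real.Gamma x := Real.Gamma_pos_of_pos hx0
      have h1 : D * Real.Gamma x ≤ x * Real.Gamma x :=
        mul_le_mul_of_nonneg_right hxD hG.le
      have h2 : x * Real.Gamma x = Real.Gamma (x + 1) :=
        (Real.Gamma_add_one (ne_of_gt hx0)).symm
      have h3 : Real.Gamma (x + 1) ≤ Real.Gamma (x + p) := by
        rcases eq_or_lt_of_le hp1 with h | h
        · rw [← h]
        · exact le_of_lt (Real.Gamma_strictMonoOn_Ici (by simp; linarith)
            (by simp; linarith) (by linarith))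
      linarith
    · filter_upwards [eventually_ge_atTop (max 2 ((2*D) ^ p⁻¹))] with x hx
      have hx2 : (2:ℝ) ≤ x := le_trans (le_max_left _ _) hx
      have hxD : (2*D) ^ p⁻¹ ≤ x := le_trans (le_max_right _ _) hx
      have hx0 : 0 < x := by linarith
      have hG : 0 < Real.Gamma x := Real.Gamma_pos_of_pos hx0
      have hxp0 : 0 < x + p := by linarith
      have hGp : 0 < Real.Gamma (x + p) := Real.Gamma_pos_of_pos hxp0
      -- (2x)^p ≥ 2D
      have hpow : 2 * D ≤ (2*x) ^ p := by
        have h1 : ((2*D) ^ p⁻¹) ^ p ≤ x ^ p :=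
          Real.rpow_le_rpow (Real.rpow_nonneg (by positivity) _) hxD hp.le
        have h2 : ((2*D) ^ p⁻¹) ^ p = 2 * D :=
          Real.rpow_inv_rpow (by positivity) hp.ne'
        have h3 : x ^ p ≤ (2*x) ^ p :=
          Real.rpow_le_rpow hx0.le (by linarith) hp.le
        rw [h2] at h1; linarith
      -- log-convexity: Γ(x+1) ≤ Γ(x+p) * (x+p)^(1-p)
      have hconv : Real.Gamma (x + 1) ≤ Real.Gamma (x+p) * (x+p) ^ (1-p) := by
        have h := Real.Gamma_mul_add_mul_le_rpow_Gamma_mul_rpow_Gamma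
          (s := x + p) (t := x + p + 1) (a := p) (b := 1 - p)
          hxp0 (by linarith) hp (by linarith) (by ring)
        have harg : p * (x + p) + (1 - p) * (x + p + 1) = x + 1 := by ring
        rw [harg, Real.Gamma_add_one (ne_of_gt hxp0),
          Real.mul_rpow hxp0.le hGp.le, ← mul_assoc] at h
        have heq : Real.Gamma (x+p) ^ p * (x+p) ^ (1-p) * Real.Gamma (x+p) ^ (1-p)
            = Real.Gamma (x+p) * (x+p) ^ (1-p) := by
          rw [mul_right_comm, ← Real.rpow_add hGp]; norm_num
        rw [heq] at h; exact h
      have hG1 : Real.Gamma (x + 1) = x * Real.Gamma x :=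
        Real.Gamma_add_one (ne_of_gt hx0)
      have h4 : (x+p) ^ (1-p) ≤ (2*x) ^ (1-p) :=
        Real.rpow_le_rpow hxp0.le (by linarith) (by linarith)
      have h5 : x * Real.Gamma x ≤ Real.Gamma (x+p) * (2*x) ^ (1-p) := by
        rw [← hG1]
        exact hconv.trans (mul_le_mul_of_nonneg_left h4 hGp.le)
      -- D * (2x)^(1-p) ≤ x
      have h6 : D * (2*x) ^ (1-p) ≤ x := by
        have hsub : (2*x) ^ (1-p) = (2*x) / (2*x) ^ p := by
          rw [Real.rpow_sub (by linarith), Real.rpow_one]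
        rw [hsub]
        rw [mul_div_assoc', div_le_iff₀ (by positivity)]
        calc D * (2*x) = (2*D) * x := by ring
          _ ≤ (2*x) ^ p * x := mul_le_mul_of_nonneg_right hpow hx0.le
          _ = x * (2*x) ^ p := by ring
      -- combine
      have hpow0 : 0 < (2*x) ^ (1-p) := Real.rpow_pos_of_pos (by linarith) _
      calc D * Real.Gamma x
          ≤ (x / (2*x) ^ (1-p)) * Real.Gamma x := by
            apply mul_le_mul_of_nonneg_right _ hG.le
            rw [le_div_iff₀ hpow0]; exact h6
        _ ≤ Real.Gamma (x+p) := by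
            rw [div_mul_eq_mul_div, div_le_iff₀ hpow0]
            exact h5
  filter_upwards [main, eventually_gt_atTop 0] with x hx hx0
  exact le_trans (mul_le_mul_of_nonneg_right hCD (Real.Gamma_pos_of_pos hx0).le) hx

lemma summable_master {p c : ℝ} (hp : 0 < p) (hc : 0 < c) (j : ℕ) {R : ℝ} (hR : 0 < R) :
    Summable (fun k : ℕ => (k + 1 : ℝ) ^ j * R ^ k / Real.Gamma (p * k + c)) := by
  apply summable_of_ratio_norm_eventually_le (r := 1/2) (by norm_num)
  have ht : Tendsto (fun k : ℕ => p * k + c) atTop atTop :=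
    tendsto_atTop_add_const_right _ c
      ((tendsto_natCast_atTop_atTop (R := ℝ)).const_mul_atTop hp)
  filter_upwards [ht.eventually (gamma_growth hp (2 ^ (j+1) * R))] with k hk
  have hpos : (0:ℝ) < p * k + c := by positivity
  have hG : 0 < Real.Gamma (p * k + c) := Real.Gamma_pos_of_pos hpos
  have hG' : 0 < Real.Gamma (p * (k+1 : ℕ) + c) := by
    apply Real.Gamma_pos_of_pos; push_cast; nlinarith
  have harg : p * ((k:ℕ)+1 : ℕ) + c = p * k + c + p := by push_cast; ring
  rw [Real.norm_of_nonneg (by positivity), Real.norm_of_nonneg (by positivity)]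
  rw [div_le_iff₀ hG', harg]
  have hk' : 2 ^ (j+1) * R * Real.Gamma (p * k + c) ≤ Real.Gamma (p * k + c + p) := hk
  calc ((k+1:ℕ) + 1 : ℝ) ^ j * R ^ (k+1)
      ≤ (2 * ((k:ℝ) + 1)) ^ j * R ^ (k+1) := by
        apply mul_le_mul_of_nonneg_right _ (by positivity)
        apply pow_le_pow_left₀ (by positivity) (by push_cast; linarith)
    _ = 1/2 * ((k:ℝ)+1) ^ j * R ^ k / Real.Gamma (p*k+c) *
          (2 ^ (j+1) * R * Real.Gamma (p*k+c)) := by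
        rw [mul_pow]; field_simp; ring
    _ ≤ 1/2 * ((k:ℝ)+1) ^ j * R ^ k / Real.Gamma (p*k+c) *
          Real.Gamma (p*k+c+p) := by
        apply mul_le_mul_of_nonneg_left hk' (by positivity)
    _ = 1/2 * (((k:ℝ)+1) ^ j * R ^ k / Real.Gamma (p*k+c)) *
          Real.Gamma (p*k+c+p) := by ring

noncomputable def MLcoef (p q : ℝ) (m k : ℕ) : ℝ :=
  ((k + m).descFactorial m : ℝ) / Real.Gamma (p * (k + m : ℕ) + q)

noncomputable def MLder (p q : ℝ) (m : ℕ) (z : ℝ) : ℝ :=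
  ∑' k : ℕ, MLcoef p q m k * z ^ k

lemma MLcoef_nonneg {p q : ℝ} (hp : 0 < p) (hq : 0 < q) (m k : ℕ) :
    0 ≤ MLcoef p q m k := by
  unfold MLcoef
  have : (0:ℝ) < Real.Gamma (p * (k + m : ℕ) + q) :=
    Real.Gamma_pos_of_pos (by positivity)
  positivity

lemma MLcoef_le {p q : ℝ} (hp : 0 < p) (hq : 0 < q) (m k : ℕ) :
    MLcoef p q m k ≤
      ((m+1:ℝ) ^ m * (k+1:ℝ) ^ m) / Real.Gamma (p * k + (p * m + q)) := by
  have harg : p * ((k + m : ℕ) : ℝ) + q = p * k + (p * m + q) := by push_cast; ring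
  have hG : (0:ℝ) < Real.Gamma (p * k + (p * m + q)) :=
    Real.Gamma_pos_of_pos (by positivity)
  unfold MLcoef
  rw [harg]
  gcongr
  calc ((k + m).descFactorial m : ℝ) ≤ ((k + m : ℕ) : ℝ) ^ m := by
        exact_mod_cast Nat.descFactorial_le_pow _ _
    _ ≤ ((k+1:ℝ) * (m+1:ℝ)) ^ m := by
        apply pow_le_pow_left₀ (by positivity)
        push_cast; nlinarith [Nat.cast_nonneg (α := ℝ) k, Nat.cast_nonneg (α := ℝ) m]
    _ = (m+1:ℝ) ^ m * (k+1:ℝ) ^ m := by rw [mul_pow]; ring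

lemma summable_MLcoef_bound {p q : ℝ} (hp : 0 < p) (hq : 0 < q) (m j : ℕ) {R : ℝ}
    (hR : 0 < R) :
    Summable (fun k : ℕ => MLcoef p q m k * ((k+1:ℝ) ^ j * R ^ k)) := by
  apply Summable.of_nonneg_of_le
    (fun k => by
      have := MLcoef_nonneg hp hq m k
      positivity)
    (fun k => ?_)
    (((summable_master hp (by positivity : (0:ℝ) < p * m + q) (j + m) hR).mul_left
      ((m+1:ℝ) ^ m)))
  have hG : (0:ℝ) < Real.Gamma (p * k + (p * m + q)) :=
    Real.Gamma_pos_of_pos (by positivity)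
  calc MLcoef p q m k * ((k+1:ℝ) ^ j * R ^ k)
      ≤ ((m+1:ℝ) ^ m * (k+1:ℝ) ^ m) / Real.Gamma (p * k + (p * m + q)) *
          ((k+1:ℝ) ^ j * R ^ k) :=
        mul_le_mul_of_nonneg_right (MLcoef_le hp hq m k) (by positivity)
    _ = (m+1:ℝ) ^ m * ((k+1:ℝ) ^ (j+m) * R ^ k / Real.Gamma (p * k + (p * m + q))) := by
        rw [pow_add]; ring

lemma MLder_hasDerivAt {p q : ℝ} (hp : 0 < p) (hq : 0 < q) (m : ℕ) (z : ℝ) :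
    HasDerivAt (MLder p q m) (MLder p q (m+1) z) z := by
  set R : ℝ := |z| + 1 with hRdef
  have hR0 : 0 < R := by positivity
  set u : ℕ → ℝ := fun k => MLcoef p q m k * ((k+1:ℝ) ^ 1 * R ^ k) * R⁻¹ with hu_def
  have hu : Summable u := (summable_MLcoef_bound hp hq m 1 hR0).mul_right R⁻¹
  have hbound : ∀ (k : ℕ) (y : ℝ), y ∈ Ioo (-R) R →
      ‖MLcoef p q m k * (k * y ^ (k-1))‖ ≤ u k := by
    intro k y hy
    have hyR : |y| ≤ R := by
      rw [abs_le]; exact ⟨hy.1.le, hy.2.le⟩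
    have hc := MLcoef_nonneg hp hq m k
    rw [norm_mul, norm_mul, Real.norm_of_nonneg hc, Real.norm_natCast, norm_pow]
    match k with
    | 0 => simp [hu_def]; positivity
    | (n+1) =>
      have h1 : ‖y‖ ^ (n+1-1) ≤ R ^ n := by
        simpa using pow_le_pow_left₀ (norm_nonneg y) hyR n
      have h2 : u (n+1) = MLcoef p q m (n+1) * ((n+2:ℝ) * R ^ n) := by
        rw [hu_def]
        field_simp
        push_cast; ring
      rw [h2]
      have : ((n+1:ℕ) : ℝ) * ‖y‖ ^ (n+1-1) ≤ (n+2:ℝ) * R ^ n := by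
        push_cast
        have hn : (0:ℝ) ≤ (n:ℝ) + 1 := by positivity
        calc ((n:ℝ)+1) * ‖y‖ ^ (n+1-1) ≤ ((n:ℝ)+1) * R ^ n :=
              mul_le_mul_of_nonneg_left h1 hn
          _ ≤ ((n:ℝ)+2) * R ^ n := by
              apply mul_le_mul_of_nonneg_right (by linarith) (by positivity)
      exact mul_le_mul_of_nonneg_left this hc
  have key := hasDerivAt_tsum_of_isPreconnected hu isOpen_Ioo
    (convex_Ioo (-R) R).isPreconnected
    (g := fun k y => MLcoef p q m k * y ^ k)
    (g' := fun k y => MLcoef p q m k * (k * y ^ (k-1)))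
    (fun k y _ => (hasDerivAt_pow k y).const_mul (MLcoef p q m k))
    hbound
    (y₀ := 0) (by constructor <;> [linarith; linarith])
    (by
      apply summable_of_ne_finset_zero (s := {0})
      intro k hk
      simp only [Finset.mem_singleton] at hk
      simp [zero_pow hk])
    (show z ∈ Ioo (-R) R by
      constructor
      · have := neg_abs_le z; linarith
      · have := le_abs_self z; linarith)
  have hsum : Summable (fun k => MLcoef p q m k * (k * z ^ (k-1))) := by
    apply Summable.of_norm_bounded hu
    intro k
    apply hbound k z
    constructor
    · have := neg_abs_le z; linarith
    · have := le_abs_self z; linarith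
  have hval : (∑' k : ℕ, MLcoef p q m k * (k * z ^ (k-1))) = MLder p q (m+1) z := by
    rw [Summable.tsum_eq_zero_add hsum]
    simp only [Nat.cast_zero, zero_mul, mul_zero, zero_add]
    apply tsum_congr
    intro j
    have hnum : MLcoef p q m (j+1) * ((j+1 : ℕ) : ℝ) = MLcoef p q (m+1) j := by
      unfold MLcoef
      have h1 : (j + (m+1)).descFactorial (m+1) = (j+1) * (j+1+m).descFactorial m := by
        have : j + (m+1) = (j+1+m) := by omega
        rw [this, Nat.descFactorial_succ]
        congr 1
        omega
      have h2 : (j + 1 + m : ℕ) = (j + (m + 1) : ℕ) := by omega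
      rw [h2, h1]
      push_cast
      field_simp
      ring
    rw [← hnum]
    push_cast
    ring
  rw [← hval]
  exact key

lemma iteratedDeriv_mittagLeffler {p q : ℝ} (hp : 0 < p) (hq : 0 < q) (m : ℕ) :
    iteratedDeriv m (mittagLeffler p q) = MLder p q m := by
  induction m with
  | zero =>
    rw [iteratedDeriv_zero]
    funext z
    unfold mittagLeffler MLder MLcoef
    apply tsum_congr
    intro k
    simp [Nat.descFactorial]
    ring
  | succ n ih =>
    rw [iteratedDeriv_succ, ih]
    funext z
    exact (MLder_hasDerivAt hp hq n z).deriv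

/-- Sadik transform of `t^{pm+q-1} E_{p,q}^{(m)}(a t^p)` equals
`m! v^{αp-(αq+β)} / (v^{αp} - a)^{m+1}`. -/
theorem sadik_transform_mittagLeffler (p q : ℝ) (m : ℕ) (a α β v : ℝ)
    (hp : 0 < p) (hq : 0 < q) (hα : α ≠ 0) (hv : 0 < v)
    (hva : |a| < v ^ (α * p)) :
    v ^ (-β) * ∫ t in Set.Ioi (0:ℝ),
        Real.exp (-t * v ^ α) *
          (t ^ (p * m + q - 1) * iteratedDeriv m (mittagLeffler p q) (a * t ^ p)) =
      (Nat.factorial m : ℝ) * v ^ (α * p - (α * q + β)) / (v ^ (α * p) - a) ^ (m + 1) := by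
  set s : ℝ := v ^ α with hs_def
  have hs : 0 < s := Real.rpow_pos_of_pos hv α
  have hsp : v ^ (α * p) = s ^ p := Real.rpow_mul hv.le α p
  have hsp0 : 0 < s ^ p := Real.rpow_pos_of_pos hs p
  have hva' : |a| < s ^ p := hsp ▸ hva
  have hxa : |a / s ^ p| < 1 := by
    rw [abs_div, abs_of_pos hsp0, div_lt_one hsp0]; exact hva'
  set g : ℕ → ℝ → ℝ := fun k t =>
    MLcoef p q m k * a ^ k * (t ^ (p * ((k+m : ℕ):ℝ) + q - 1) * Real.exp (-(s * t)))
    with hg_def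
  have hcexp : ∀ k : ℕ, (0:ℝ) < p * ((k+m : ℕ):ℝ) + q := by
    intro k; positivity
  have hGpos : ∀ k : ℕ, (0:ℝ) < Real.Gamma (p * ((k+m : ℕ):ℝ) + q) :=
    fun k => Real.Gamma_pos_of_pos (hcexp k)
  -- Step 1: pointwise identity of the integrand on Ioi 0
  have step1 : ∀ t ∈ Set.Ioi (0:ℝ),
      Real.exp (-t * s) *
        (t ^ (p * m + q - 1) * iteratedDeriv m (mittagLeffler p q) (a * t ^ p)) =
      ∑' k : ℕ, g k t := by
    intro t ht
    rw [Set.mem_Ioi] at ht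
    rw [iteratedDeriv_mittagLeffler hp hq m]
    unfold MLder
    rw [← tsum_mul_left, ← tsum_mul_left]
    apply tsum_congr
    intro k
    have e1 : (a * t ^ p) ^ k = a ^ k * t ^ (p * (k:ℝ)) := by
      rw [mul_pow, ← Real.rpow_natCast (t ^ p) k, ← Real.rpow_mul ht.le]
    have e2 : t ^ (p * ((k+m : ℕ):ℝ) + q - 1) = t ^ (p * (m:ℝ) + q - 1) * t ^ (p * (k:ℝ)) := by
      rw [← Real.rpow_add ht]; congr 1; push_cast; ring
    rw [hg_def]
    simp only
    rw [e1, e2, show -t * s = -(s * t) by ring]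
    ring
  rw [setIntegral_congr_fun measurableSet_Ioi step1]
  -- Step 2: integrability facts
  have hint : ∀ k : ℕ, Integrable (g k) (volume.restrict (Set.Ioi 0)) := by
    intro k
    have base : IntegrableOn
        (fun t : ℝ => t ^ (p * ((k+m : ℕ):ℝ) + q - 1) * Real.exp (-(s * t))) (Set.Ioi 0) := by
      have := integrableOn_rpow_mul_exp_neg_mul_rpow
        (s := p * ((k+m : ℕ):ℝ) + q - 1) (p := 1) (b := s)
        (by linarith [hcexp k]) one_pos hs
      simpa [Real.rpow_one, neg_mul] using this
    exact base.const_mul _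
  have hval : ∀ (b : ℝ) (k : ℕ),
      (∫ t in Set.Ioi (0:ℝ), b * (t ^ (p * ((k+m : ℕ):ℝ) + q - 1) * Real.exp (-(s * t)))) =
        b * ((1/s) ^ (p * ((k+m : ℕ):ℝ) + q) * Real.Gamma (p * ((k+m : ℕ):ℝ) + q)) := by
    intro b k
    rw [MeasureTheory.integral_const_mul]
    congr 1
    exact integral_rpow_mul_exp_neg_mul_Ioi (hcexp k) hs
  have hinvsplit : ∀ k : ℕ, (1/s : ℝ) ^ (p * ((k+m : ℕ):ℝ) + q) =
      ((1:ℝ)/s ^ p) ^ k * (1/s) ^ (p * (m:ℝ) + q) := by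
    intro k
    have h1 : p * ((k+m : ℕ):ℝ) + q = p * (k:ℝ) + (p * (m:ℝ) + q) := by push_cast; ring
    rw [h1, Real.rpow_add (by positivity), Real.rpow_mul (by positivity : (0:ℝ) ≤ 1/s),
      Real.rpow_natCast]
    congr 2
    rw [one_div, one_div, Real.inv_rpow hs.le]
  -- Step 3: swap integral and sum
  have hnorm : Summable (fun k : ℕ => ∫ t in Set.Ioi (0:ℝ), ‖g k t‖) := by
    have heq : ∀ k : ℕ, (∫ t in Set.Ioi (0:ℝ), ‖g k t‖) =
        ((k+m).descFactorial m : ℝ) * (|a| / s ^ p) ^ k * (1/s) ^ (p * (m:ℝ) + q) := by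
      intro k
      have habs : ∀ t ∈ Set.Ioi (0:ℝ), ‖g k t‖ =
          (MLcoef p q m k * |a| ^ k) *
            (t ^ (p * ((k+m : ℕ):ℝ) + q - 1) * Real.exp (-(s * t))) := by
        intro t ht
        rw [Set.mem_Ioi] at ht
        rw [hg_def]
        simp only
        rw [norm_mul, norm_mul, norm_mul, Real.norm_of_nonneg (MLcoef_nonneg hp hq m k),
          norm_pow, Real.norm_eq_abs,
          Real.norm_of_nonneg (Real.rpow_nonneg ht.le _),
          Real.norm_of_nonneg (Real.exp_pos _).le]
      rw [setIntegral_congr_fun measurableSet_Ioi habs, hval, hinvsplit]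
      have hcoef : MLcoef p q m k * Real.Gamma (p * ((k+m : ℕ):ℝ) + q) =
          ((k+m).descFactorial m : ℝ) := by
        unfold MLcoef
        field_simp
      calc MLcoef p q m k * |a| ^ k * ((1/s^p) ^ k * (1/s) ^ (p * (m:ℝ) + q) *
              Real.Gamma (p * ((k+m : ℕ):ℝ) + q))
          = (MLcoef p q m k * Real.Gamma (p * ((k+m : ℕ):ℝ) + q)) *
              (|a| ^ k * (1/s^p) ^ k) * (1/s) ^ (p * (m:ℝ) + q) := by ring
        _ = ((k+m).descFactorial m : ℝ) * (|a| / s ^ p) ^ k * (1/s) ^ (p * (m:ℝ) + q) := by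
            rw [hcoef, ← mul_pow]
            congr 3
            field_simp
    rw [funext heq]
    apply Summable.mul_right
    have := summable_descFactorial_mul_geometric_of_norm_lt_one (R := ℝ) m
      (r := |a| / s ^ p) (by
        rw [Real.norm_eq_abs, abs_of_nonneg (by positivity)]
        rw [div_lt_one hsp0]; exact hva')
    exact this
  rw [← MeasureTheory.integral_tsum_of_summable_integral_norm hint hnorm]
  -- Step 4: compute the sum of integrals
  have hsumval : (∑' k : ℕ, ∫ t in Set.Ioi (0:ℝ), g k t) =
      (1/s) ^ (p * (m:ℝ) + q) * ∑' k : ℕ,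
        ((k+m).descFactorial m : ℝ) * (a / s ^ p) ^ k := by
    rw [← tsum_mul_left]
    apply tsum_congr
    intro k
    rw [hg_def]
    simp only
    rw [hval, hinvsplit]
    have hcoef : MLcoef p q m k * Real.Gamma (p * ((k+m : ℕ):ℝ) + q) =
        ((k+m).descFactorial m : ℝ) := by
      unfold MLcoef
      field_simp
    calc MLcoef p q m k * a ^ k * ((1/s^p) ^ k * (1/s) ^ (p * (m:ℝ) + q) *
            Real.Gamma (p * ((k+m : ℕ):ℝ) + q))
        = (MLcoef p q m k * Real.Gamma (p * ((k+m : ℕ):ℝ) + q)) *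
            (a ^ k * (1/s^p) ^ k) * (1/s) ^ (p * (m:ℝ) + q) := by ring
      _ = (1/s) ^ (p * (m:ℝ) + q) * (((k+m).descFactorial m : ℝ) * (a / s ^ p) ^ k) := by
          rw [hcoef, ← mul_pow]
          have : a * (1/s^p) = a / s^p := by field_simp
          rw [this]; ring
  rw [hsumval]
  -- Step 5: evaluate the geometric-type sum
  have hgeom : (∑' k : ℕ, ((k+m).descFactorial m : ℝ) * (a / s ^ p) ^ k) =
      (Nat.factorial m : ℝ) * (1 / (1 - a / s ^ p) ^ (m+1)) := by
    have h1 : ∀ k : ℕ, ((k+m).descFactorial m : ℝ) * (a / s ^ p) ^ k =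
        (Nat.factorial m : ℝ) * (((k+m).choose m : ℝ) * (a / s ^ p) ^ k) := by
      intro k
      rw [Nat.descFactorial_eq_factorial_mul_choose]
      push_cast; ring
    rw [funext h1, tsum_mul_left, tsum_choose_mul_geometric_of_norm_lt_one m
      (by rw [Real.norm_eq_abs]; exact hxa)]
  rw [hgeom]
  -- Step 6: final algebra
  have hden : (1 : ℝ) - a / s ^ p = (s ^ p - a) / s ^ p := by field_simp
  have hdenpos : (0:ℝ) < s ^ p - a := by
    have := le_abs_self a; linarith
  rw [hden, div_pow, one_div_div]
  have hpow1 : (s ^ p) ^ (m+1) = s ^ (p * ((m:ℝ)+1)) := by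
    rw [← Real.rpow_natCast (s ^ p) (m+1), ← Real.rpow_mul hs.le]
    push_cast; ring_nf
  have hpow2 : (1/s : ℝ) ^ (p * (m:ℝ) + q) = s ^ (-(p * (m:ℝ) + q)) := by
    rw [one_div, Real.inv_rpow hs.le, ← Real.rpow_neg hs.le]
  have hfinal : v ^ (-β) * ((1/s) ^ (p * (m:ℝ) + q) * (s ^ p) ^ (m+1)) =
      v ^ (α * p - (α * q + β)) := by
    rw [hpow1, hpow2, ← Real.rpow_add hs]
    have : -(p * (m:ℝ) + q) + p * ((m:ℝ)+1) = p - q := by ring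
    rw [this, hs_def, ← Real.rpow_mul hv.le, ← Real.rpow_add hv]
    congr 1; ring
  calc v ^ (-β) * ((1/s) ^ (p * (m:ℝ) + q) *
          ((Nat.factorial m : ℝ) * ((s ^ p) ^ (m+1) / (s ^ p - a) ^ (m+1))))
      = (Nat.factorial m : ℝ) *
          (v ^ (-β) * ((1/s) ^ (p * (m:ℝ) + q) * (s ^ p) ^ (m+1))) / (s ^ p - a) ^ (m+1) := by
        ring
    _ = (Nat.factorial m : ℝ) * v ^ (α * p - (α * q + β)) / (v ^ (α * p) - a) ^ (m+1) := by
        rw [hfinal, hsp]
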